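/- arXiv:1906.06104 — 2 statements merged into one kernel-verified Lean document; each statement's English description precedes it below -/
import Mathlib

section
/- Let R be a commutative noetherian ring and f : M → N a map of finitely generated R-modules. Then the set {𝔭 ∈ Spec(R) : f_𝔭 = 0} is open in the Zariski topology on Spec(R). -/
/-- Let `R` be a commutative noetherian ring and `f : M → N` a map of
finitely generated `R`-modules.  Then the set `{𝔭 ∈ Spec R : f_𝔭 = 0}` is open in the
Zariski topology on `Spec R`. -/
theorem mapZeroLocus_isOpen
    {R : Type*} [CommRing R] [IsNoetherianRing R]
    {M N : Type*} [AddCommGroup M] [AddCommGroup N] [Module R M] [Module R N]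
    [Module.Finite R M] [Module.Finite R N] (f : M →ₗ[R] N) :
    IsOpen {𝔭 : PrimeSpectrum R |
      LocalizedModule.map 𝔭.asIdeal.primeCompl f = 0} := by
  obtain ⟨t, ht⟩ := (Module.Finite.fg_top (R := R) (M := M))
  have key : ∀ 𝔭 : PrimeSpectrum R,
      (LocalizedModule.map 𝔭.asIdeal.primeCompl f = 0) ↔
      ∀ m ∈ t, ¬ (LinearMap.ker (LinearMap.toSpanSingleton R N (f m)) ≤ 𝔭.asIdeal) := by
    intro 𝔭
    constructor
    · intro h m hm hle
      have h0 : LocalizedModule.map 𝔭.asIdeal.primeCompl f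
          (LocalizedModule.mk m 1) = 0 := by rw [h]; rfl
      rw [LocalizedModule.map_mk] at h0
      obtain ⟨u, hu⟩ := (LocalizedModule.mk_eq (m := f m) (m' := 0) (s := 1) (s' := 1)).mp
        (by simpa using h0)
      simp only [smul_zero, one_smul] at hu
      have : (u : R) ∈ LinearMap.ker (LinearMap.toSpanSingleton R N (f m)) := by
        simpa [LinearMap.mem_ker, LinearMap.toSpanSingleton_apply, Submonoid.smul_def] using hu
      exact u.2 (hle this)
    · intro h
      have hz : ∀ x : M, LocalizedModule.mk (f x) (1 : 𝔭.asIdeal.primeCompl) = 0 := by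
        intro x
        have hx : x ∈ Submodule.span R (t : Set M) := ht ▸ Submodule.mem_top
        induction hx using Submodule.span_induction with
        | mem y hy =>
          obtain ⟨s, hs, hs0⟩ := SetLike.not_le_iff_exists.mp (h y hy)
          rw [LinearMap.mem_ker, LinearMap.toSpanSingleton_apply] at hs
          rw [show (0 : LocalizedModule 𝔭.asIdeal.primeCompl N) = LocalizedModule.mk 0 1 from (LocalizedModule.zero_mk 1).symm,
            LocalizedModule.mk_eq]
          exact ⟨⟨s, hs0⟩, by simpa [Submonoid.smul_def] using hs⟩
        | zero => simp [show LocalizedModule.mk (0:N) (1 : 𝔭.asIdeal.primeCompl) = 0 from LocalizedModule.zero_mk 1]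
        | add y z _ _ hy hz =>
          have : LocalizedModule.mk (f (y + z)) (1 : 𝔭.asIdeal.primeCompl)
              = LocalizedModule.mk (f y) 1 + LocalizedModule.mk (f z) 1 := by
            rw [LocalizedModule.mk_add_mk]; simp
          rw [this, hy, hz, add_zero]
        | smul r y _ hy =>
          rw [map_smul, show (r • f y : N) = r • f y from rfl]
          rw [← LocalizedModule.smul'_mk, hy, smul_zero]
      ext x
      induction x using LocalizedModule.induction_on with
      | h m s =>
        simp only [LinearMap.zero_apply, LocalizedModule.map_mk]
        have := hz m
        rw [show (0 : LocalizedModule 𝔭.asIdeal.primeCompl N) = LocalizedModule.mk 0 1 from (LocalizedModule.zero_mk 1).symm,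
          LocalizedModule.mk_eq] at this ⊢
        obtain ⟨u, hu⟩ := this
        exact ⟨u, by simpa using hu⟩
  have : {𝔭 : PrimeSpectrum R | LocalizedModule.map 𝔭.asIdeal.primeCompl f = 0} =
      ⋂ m ∈ t, (PrimeSpectrum.zeroLocus
        (LinearMap.ker (LinearMap.toSpanSingleton R N (f m)) : Set R))ᶜ := by
    ext 𝔭
    simp only [Set.mem_setOf_eq, key, Set.mem_iInter, Set.mem_compl_iff,
      PrimeSpectrum.mem_zeroLocus, SetLike.coe_subset_coe]
  rw [this]
  exact Set.Finite.isOpen_biInter t.finite_toSet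
    (fun m _ => (PrimeSpectrum.isClosed_zeroLocus _).isOpen_compl)
end

section
/- Let R be a commutative noetherian ring, 𝔭 a prime ideal, and M, N finitely generated R-modules. For any R_𝔭-linear map f : M_𝔭 → N_𝔭 there exist r ∈ R ∖ 𝔭 and an R-linear map g : M → N such that r • f equals the localization g_𝔭. -/
/-- Let `R` be a commutative noetherian ring, `𝔭` a prime ideal, and
`M`, `N` finitely generated `R`-modules.  For any `R_𝔭`-linear map `f : M_𝔭 → N_𝔭`
there exist `r ∈ R ∖ 𝔭` and an `R`-linear map `g : M → N` such that `r • f` equals the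
localization `g_𝔭`. -/
theorem exists_smul_eq_localizedMap
    {R : Type*} [CommRing R] [IsNoetherianRing R]
    {M N : Type*} [AddCommGroup M] [AddCommGroup N] [Module R M] [Module R N]
    [Module.Finite R M] [Module.Finite R N] (𝔭 : Ideal R) [𝔭.IsPrime]
    (f : LocalizedModule 𝔭.primeCompl M →ₗ[Localization.AtPrime 𝔭]
        LocalizedModule 𝔭.primeCompl N) :
    ∃ (r : R), r ∈ 𝔭.primeCompl ∧ ∃ (g : M →ₗ[R] N),
      r • (LinearMap.restrictScalars R f) = LocalizedModule.map 𝔭.primeCompl g := by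
  have : Module.FinitePresentation R M := Module.finitePresentation_of_finite R M
  obtain ⟨g, s, hg⟩ := Module.FinitePresentation.exists_lift_of_isLocalizedModule 𝔭.primeCompl
    (LocalizedModule.mkLinearMap 𝔭.primeCompl N)
    ((f.restrictScalars R) ∘ₗ LocalizedModule.mkLinearMap 𝔭.primeCompl M)
  refine ⟨s, s.2, g, ?_⟩
  apply LinearMap.restrictScalars_injective R
  apply IsLocalizedModule.ext 𝔭.primeCompl (LocalizedModule.mkLinearMap 𝔭.primeCompl M)
    (IsLocalizedModule.map_units (LocalizedModule.mkLinearMap 𝔭.primeCompl N))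
  ext x
  have := LinearMap.congr_fun hg x
  simp only [LinearMap.coe_comp, Function.comp_apply, LinearMap.coe_restrictScalars, LinearMap.smul_apply, LocalizedModule.mkLinearMap_apply] at this ⊢
  rw [LocalizedModule.map_mk]
  exact this.symm
end
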